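/- Let k be a field, V a k-vector space, and f ∈ End_k(V). Then R := f⊗I ∈ End_k(V⊗V) is a solution of the Hopf equation (R¹²R²³ = R²³R¹³R¹²) if and only if f² = f; likewise, R' := I⊗f is a solution of the Hopf equation if and only if f² = f. -/
import Mathlib


open TensorProduct LinearMap

section HopfEq

variable (k V : Type*) [Field k] [AddCommGroup V] [Module k V]

/-- The flip map `τ : V ⊗ V → V ⊗ V`, `τ(v ⊗ w) = w ⊗ v`. -/
noncomputable def flipMap : V ⊗[k] V →ₗ[k] V ⊗[k] V :=
  (TensorProduct.comm k V V).toLinearMap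

variable {k V}

/-- `R¹² = R ⊗ I` as an endomorphism of `V ⊗ V ⊗ V`. -/
noncomputable def map12 (R : V ⊗[k] V →ₗ[k] V ⊗[k] V) :
    V ⊗[k] (V ⊗[k] V) →ₗ[k] V ⊗[k] (V ⊗[k] V) :=
  (TensorProduct.assoc k V V V).toLinearMap ∘ₗ R.rTensor V ∘ₗ
    (TensorProduct.assoc k V V V).symm.toLinearMap

/-- `R²³ = I ⊗ R` as an endomorphism of `V ⊗ V ⊗ V`. -/
noncomputable def map23 (R : V ⊗[k] V →ₗ[k] V ⊗[k] V) :
    V ⊗[k] (V ⊗[k] V) →ₗ[k] V ⊗[k] (V ⊗[k] V) :=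
  R.lTensor V

/-- `R¹³ = (I ⊗ τ)(R ⊗ I)(I ⊗ τ)` as an endomorphism of `V ⊗ V ⊗ V`. -/
noncomputable def map13 (R : V ⊗[k] V →ₗ[k] V ⊗[k] V) :
    V ⊗[k] (V ⊗[k] V) →ₗ[k] V ⊗[k] (V ⊗[k] V) :=
  (flipMap k V).lTensor V ∘ₗ map12 R ∘ₗ (flipMap k V).lTensor V

/-- `R` is a solution of the Hopf equation: `R¹²R²³ = R²³R¹³R¹²`. -/
def IsHopfSolution (R : V ⊗[k] V →ₗ[k] V ⊗[k] V) : Prop :=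
  map12 R ∘ₗ map23 R = map23 R ∘ₗ map13 R ∘ₗ map12 R

/-- `R` is a solution of the pentagonal equation: `R¹²R¹³R²³ = R²³R¹²`. -/
def IsPentagonSolution (R : V ⊗[k] V →ₗ[k] V ⊗[k] V) : Prop :=
  map12 R ∘ₗ map13 R ∘ₗ map23 R = map23 R ∘ₗ map12 R

end HopfEq

section Aux

variable {k V : Type*} [Field k] [AddCommGroup V] [Module k V]

lemma exists_dual_one (w : V) (hw : w ≠ 0) : ∃ g : V →ₗ[k] k, g w = 1 := by
  have := (Module.forall_dual_apply_eq_zero_iff k w).not.mpr hw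
  push_neg at this
  obtain ⟨g, hg⟩ := this
  exact ⟨(g w)⁻¹ • g, by simp [inv_mul_cancel₀ hg]⟩

/-- Extract the first slot of a triple tensor using dual functionals. -/
noncomputable def extr1 (g h : V →ₗ[k] k) : V ⊗[k] (V ⊗[k] V) →ₗ[k] V :=
  (TensorProduct.rid k V).toLinearMap ∘ₗ
    LinearMap.lTensor V ((TensorProduct.lid k k).toLinearMap ∘ₗ TensorProduct.map g h)

@[simp] lemma extr1_tmul (g h : V →ₗ[k] k) (x a b : V) :
    extr1 g h (x ⊗ₜ (a ⊗ₜ b)) = (g a * h b) • x := by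
  simp [extr1, smul_smul]

/-- Extract the third slot of a triple tensor using dual functionals. -/
noncomputable def extr3 (g h : V →ₗ[k] k) : V ⊗[k] (V ⊗[k] V) →ₗ[k] V :=
  (TensorProduct.lid k V).toLinearMap ∘ₗ
    TensorProduct.map g ((TensorProduct.lid k V).toLinearMap ∘ₗ TensorProduct.map h LinearMap.id)

@[simp] lemma extr3_tmul (g h : V →ₗ[k] k) (x a b : V) :
    extr3 g h (x ⊗ₜ (a ⊗ₜ b)) = (g x * h a) • b := by
  simp [extr3, smul_smul, mul_comm]

end Aux

/-- `f ⊗ I` (resp. `I ⊗ f`) is a solution of the Hopf equation iff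
`f` is idempotent. -/
theorem tensor_id_isHopfSolution_iff_idempotent (k V : Type*) [Field k] [AddCommGroup V]
    [Module k V] (f : V →ₗ[k] V) :
    (IsHopfSolution (TensorProduct.map f (LinearMap.id : V →ₗ[k] V)) ↔ f ∘ₗ f = f) ∧
    (IsHopfSolution (TensorProduct.map (LinearMap.id : V →ₗ[k] V) f) ↔ f ∘ₗ f = f) := by
  constructor
  · constructor
    · intro hR
      by_cases hf : f = 0
      · simp [map12, hf]
      · obtain ⟨y, hy⟩ : ∃ y, f y ≠ 0 := by
          by_contra hc; push_neg at hc; exact hf (LinearMap.ext hc)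
        obtain ⟨g, hg⟩ := exists_dual_one (k := k) (f y) hy
        ext x
        have h := LinearMap.congr_fun hR (x ⊗ₜ[k] (y ⊗ₜ[k] (f y)))
        simp only [IsHopfSolution, map12, map23, map13, flipMap, LinearMap.comp_apply,
          LinearEquiv.coe_coe, TensorProduct.assoc_symm_tmul, TensorProduct.assoc_tmul,
          LinearMap.rTensor_tmul, LinearMap.lTensor_tmul, TensorProduct.map_tmul,
          TensorProduct.comm_tmul, LinearMap.id_coe, id_eq] at h
        have h2 := congrArg (extr1 g g) h
        have h3 : f x = f (f x) := by simpa [hg] using h2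
        simp [← h3]
    · intro hf
      have hf' := LinearMap.congr_fun hf
      simp only [LinearMap.comp_apply] at hf'
      unfold IsHopfSolution map12 map23 map13 flipMap
      ext x y z
      simp [map12, hf']
  · constructor
    · intro hR
      by_cases hf : f = 0
      · simp [map12, hf]
      · obtain ⟨y, hy⟩ : ∃ y, f y ≠ 0 := by
          by_contra hc; push_neg at hc; exact hf (LinearMap.ext hc)
        obtain ⟨g, hg⟩ := exists_dual_one (k := k) (f y) hy
        ext z
        have h := LinearMap.congr_fun hR ((f y) ⊗ₜ[k] (y ⊗ₜ[k] z))
        simp only [IsHopfSolution, map12, map23, map13, flipMap, LinearMap.comp_apply,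
          LinearEquiv.coe_coe, TensorProduct.assoc_symm_tmul, TensorProduct.assoc_tmul,
          LinearMap.rTensor_tmul, LinearMap.lTensor_tmul, TensorProduct.map_tmul,
          TensorProduct.comm_tmul, LinearMap.id_coe, id_eq] at h
        have h2 := congrArg (extr3 g g) h
        have h3 : f z = f (f z) := by simpa [hg] using h2
        simp [← h3]
    · intro hf
      have hf' := LinearMap.congr_fun hf
      simp only [LinearMap.comp_apply] at hf'
      unfold IsHopfSolution map12 map23 map13 flipMap
      ext x y z
      simp [map12, hf']
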